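/- arXiv:1004.0129 — 6 statements merged into one kernel-verified Lean document; each statement's English description precedes it below -/
import Mathlib

section
/- Let $e\in\mathbb{C}$ with $e\neq 0$ and $e\neq -1$, and define $W(t,u)=\tfrac{t(t-e)\,u(u-e)}{(t+1)(u+1)}$ on the open set $V=\{(t,u)\in\mathbb{C}^2 : t\neq -1,\ u\neq -1\}$. The set of critical points of $W$ on $V$ is exactly the union of the four points of $\{0,e\}\times\{0,e\}$ and the four points $(t,u)$ with $t^2+2t-e=0$ and $u^2+2u-e=0$; this set has exactly $8$ elements, $W$ vanishes at the four points of $\{0,e\}\times\{0,e\}$, and $W$ is nonzero at the other four critical points. -/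
/-- The deformed superpotential `w'` of the compactified Landau–Ginzburg mirror of
a degree four del Pezzo surface. -/
noncomputable def delPezzoW' (e : ℂ) (p : ℂ × ℂ) : ℂ :=
  p.1 * (p.1 - e) * p.2 * (p.2 - e) / ((p.1 + 1) * (p.2 + 1))

lemma dP_hasDeriv (e t : ℂ) (ht : t + 1 ≠ 0) :
    HasDerivAt (fun x : ℂ => x * (x - e) / (x + 1)) ((t ^ 2 + 2 * t - e) / (t + 1) ^ 2) t := by
  have h1 : HasDerivAt (fun x : ℂ => x * (x - e)) (1 * (t - e) + t * 1) t :=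
    (hasDerivAt_id t).mul ((hasDerivAt_id t).sub_const e)
  have h2 : HasDerivAt (fun x : ℂ => x + 1) 1 t := (hasDerivAt_id t).add_const 1
  have h3 := h1.div h2 ht
  refine h3.congr_deriv ?_
  ring

lemma dP_eq (e : ℂ) : delPezzoW' e =
    fun p : ℂ × ℂ => (p.1 * (p.1 - e) / (p.1 + 1)) * (p.2 * (p.2 - e) / (p.2 + 1)) := by
  funext p
  simp only [delPezzoW']
  rw [div_mul_div_comm]
  ring_nf

lemma clm_zero (a b c d : ℂ) :
    c • (b • ContinuousLinearMap.snd ℂ ℂ ℂ) + d • (a • ContinuousLinearMap.fst ℂ ℂ ℂ) = 0 ↔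
      d * a = 0 ∧ c * b = 0 := by
  constructor
  · intro h
    constructor
    · simpa using DFunLike.congr_fun h ((1 : ℂ), (0 : ℂ))
    · simpa using DFunLike.congr_fun h ((0 : ℂ), (1 : ℂ))
  · rintro ⟨hA, hB⟩
    refine ContinuousLinearMap.ext fun x => ?_
    simp only [ContinuousLinearMap.add_apply, ContinuousLinearMap.smul_apply,
      ContinuousLinearMap.coe_snd', ContinuousLinearMap.coe_fst',
      ContinuousLinearMap.zero_apply, smul_eq_mul]
    linear_combination x.2 * hB + x.1 * hA

lemma dP_key (e t u : ℂ) (ht : t + 1 ≠ 0) (hu : u + 1 ≠ 0) :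
    fderiv ℂ (delPezzoW' e) (t, u) = 0 ↔
      u * (u - e) * (t ^ 2 + 2 * t - e) = 0 ∧ t * (t - e) * (u ^ 2 + 2 * u - e) = 0 := by
  have h1 : HasFDerivAt (fun p : ℂ × ℂ => p.1 * (p.1 - e) / (p.1 + 1))
      (((t ^ 2 + 2 * t - e) / (t + 1) ^ 2) • ContinuousLinearMap.fst ℂ ℂ ℂ) (t, u) :=
    (dP_hasDeriv e t ht).comp_hasFDerivAt (f := Prod.fst) (t, u) hasFDerivAt_fst
  have h2 : HasFDerivAt (fun p : ℂ × ℂ => p.2 * (p.2 - e) / (p.2 + 1))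
      (((u ^ 2 + 2 * u - e) / (u + 1) ^ 2) • ContinuousLinearMap.snd ℂ ℂ ℂ) (t, u) :=
    (dP_hasDeriv e u hu).comp_hasFDerivAt (f := Prod.snd) (t, u) hasFDerivAt_snd
  have h3 := h1.mul h2
  rw [dP_eq e, HasFDerivAt.fderiv (f := fun p : ℂ × ℂ => (p.1 * (p.1 - e) / (p.1 + 1)) *
    (p.2 * (p.2 - e) / (p.2 + 1))) h3]
  have c1 : (u * (u - e) / (u + 1)) * ((t ^ 2 + 2 * t - e) / (t + 1) ^ 2) = 0 ↔
      u * (u - e) * (t ^ 2 + 2 * t - e) = 0 := by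
    rw [div_mul_div_comm, div_eq_zero_iff,
      or_iff_left (mul_ne_zero hu (pow_ne_zero _ ht))]
  have c2 : (t * (t - e) / (t + 1)) * ((u ^ 2 + 2 * u - e) / (u + 1) ^ 2) = 0 ↔
      t * (t - e) * (u ^ 2 + 2 * u - e) = 0 := by
    rw [div_mul_div_comm, div_eq_zero_iff,
      or_iff_left (mul_ne_zero ht (pow_ne_zero _ hu))]
  rw [clm_zero]
  exact and_congr c1 c2

lemma dP_nq (e : ℂ) (he0 : e ≠ 0) (he1 : e ≠ -1) (x : ℂ) (hx : x = 0 ∨ x = e) :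
    x ^ 2 + 2 * x - e ≠ 0 := by
  rcases hx with rfl | hxe
  · intro h; exact he0 (by linear_combination -h)
  · intro h
    rcases mul_eq_zero.mp (show e * (e + 1) = 0 by
        linear_combination h - (x + e + 2) * hxe) with h' | h'
    · exact he0 h'
    · exact he1 (by linear_combination h')

lemma dP_sqfacts (e : ℂ) (he0 : e ≠ 0) (he1 : e ≠ -1) (x : ℂ) (hx : x ^ 2 + 2 * x - e = 0) :
    x ≠ -1 ∧ x ≠ 0 ∧ x ≠ e := by
  refine ⟨fun h => he1 ?_, fun h => he0 ?_, fun h => ?_⟩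
  · linear_combination (x + 1) * h - hx
  · linear_combination -hx + (x + 2) * h
  · rcases mul_eq_zero.mp (show e * (e + 1) = 0 by linear_combination hx - (x + e + 2) * h) with h' | h'
    · exact he0 h'
    · exact he1 (by linear_combination h')

theorem stmt2 (e : ℂ) (he0 : e ≠ 0) (he1 : e ≠ -1) :
    {p : ℂ × ℂ | (p.1 ≠ -1 ∧ p.2 ≠ -1) ∧ fderiv ℂ (delPezzoW' e) p = 0} =
      (({0, e} : Set ℂ) ×ˢ ({0, e} : Set ℂ)) ∪
        {p : ℂ × ℂ | p.1 ^ 2 + 2 * p.1 - e = 0 ∧ p.2 ^ 2 + 2 * p.2 - e = 0} ∧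
    {p : ℂ × ℂ | (p.1 ≠ -1 ∧ p.2 ≠ -1) ∧ fderiv ℂ (delPezzoW' e) p = 0}.ncard = 8 ∧
    (∀ p ∈ (({0, e} : Set ℂ) ×ˢ ({0, e} : Set ℂ)), delPezzoW' e p = 0) ∧
    (∀ p ∈ {p : ℂ × ℂ | p.1 ^ 2 + 2 * p.1 - e = 0 ∧ p.2 ^ 2 + 2 * p.2 - e = 0},
      delPezzoW' e p ≠ 0) := by
  have hset : {p : ℂ × ℂ | (p.1 ≠ -1 ∧ p.2 ≠ -1) ∧ fderiv ℂ (delPezzoW' e) p = 0} =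
      (({0, e} : Set ℂ) ×ˢ ({0, e} : Set ℂ)) ∪
        {p : ℂ × ℂ | p.1 ^ 2 + 2 * p.1 - e = 0 ∧ p.2 ^ 2 + 2 * p.2 - e = 0} := by
    ext ⟨t, u⟩
    simp only [Set.mem_setOf_eq, Set.mem_union, Set.mem_prod, Set.mem_insert_iff,
      Set.mem_singleton_iff]
    constructor
    · rintro ⟨⟨ht, hu⟩, hd⟩
      have ht' : t + 1 ≠ 0 := fun h => ht (by linear_combination h)
      have hu' : u + 1 ≠ 0 := fun h => hu (by linear_combination h)
      rw [dP_key e t u ht' hu'] at hd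
      obtain ⟨hA, hB⟩ := hd
      by_cases hq : t ^ 2 + 2 * t - e = 0
      · right
        refine ⟨hq, ?_⟩
        obtain ⟨-, h0, he'⟩ := dP_sqfacts e he0 he1 t hq
        rcases mul_eq_zero.mp hB with h | h
        · rcases mul_eq_zero.mp h with h | h
          · exact absurd h h0
          · exact absurd (by linear_combination h) he'
        · exact h
      · left
        have hu0 : u = 0 ∨ u = e := by
          rcases mul_eq_zero.mp hA with h | h
          · rcases mul_eq_zero.mp h with h | h
            · exact Or.inl h
            · exact Or.inr (by linear_combination h)
          · exact absurd h hq
        refine ⟨?_, hu0⟩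
        have hnu := dP_nq e he0 he1 u hu0
        rcases mul_eq_zero.mp hB with h | h
        · rcases mul_eq_zero.mp h with h | h
          · exact Or.inl h
          · exact Or.inr (by linear_combination h)
        · exact absurd h hnu
    · intro h
      rcases h with ⟨htm, hum⟩ | ⟨hq1, hq2⟩
      · have ht : t ≠ -1 := by
          rcases htm with rfl | rfl
          · norm_num
          · exact he1
        have hu : u ≠ -1 := by
          rcases hum with rfl | rfl
          · norm_num
          · exact he1
        refine ⟨⟨ht, hu⟩, ?_⟩
        rw [dP_key e t u (fun h => ht (by linear_combination h))
          (fun h => hu (by linear_combination h))]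
        have h1 : t * (t - e) = 0 := by rcases htm with rfl | rfl <;> ring
        have h2 : u * (u - e) = 0 := by rcases hum with rfl | rfl <;> ring
        exact ⟨by linear_combination (t ^ 2 + 2 * t - e) * h2,
          by linear_combination (u ^ 2 + 2 * u - e) * h1⟩
      · obtain ⟨ht, -, -⟩ := dP_sqfacts e he0 he1 t hq1
        obtain ⟨hu, -, -⟩ := dP_sqfacts e he0 he1 u hq2
        refine ⟨⟨ht, hu⟩, ?_⟩
        rw [dP_key e t u (fun h => ht (by linear_combination h))
          (fun h => hu (by linear_combination h))]
        exact ⟨by linear_combination (u * (u - e)) * hq1,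
          by linear_combination (t * (t - e)) * hq2⟩
  refine ⟨hset, ?_, ?_, ?_⟩
  · -- cardinality
    obtain ⟨s, hs⟩ := IsAlgClosed.exists_pow_nat_eq (k := ℂ) (1 + e) two_pos
    have hs0 : s ≠ 0 := by
      rintro rfl
      exact he1 (by linear_combination -hs)
    have hsne : (-1 + s : ℂ) ≠ -1 - s := fun h => hs0 (by linear_combination h / 2)
    have hR : {x : ℂ | x ^ 2 + 2 * x - e = 0} = {-1 + s, -1 - s} := by
      ext x
      simp only [Set.mem_setOf_eq, Set.mem_insert_iff, Set.mem_singleton_iff]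
      constructor
      · intro h
        rcases mul_eq_zero.mp (show (x - (-1 + s)) * (x - (-1 - s)) = 0 by
            linear_combination h - hs) with h' | h'
        · exact Or.inl (by linear_combination h')
        · exact Or.inr (by linear_combination h')
      · rintro (rfl | rfl) <;> linear_combination hs
    have hT : {p : ℂ × ℂ | p.1 ^ 2 + 2 * p.1 - e = 0 ∧ p.2 ^ 2 + 2 * p.2 - e = 0}
        = ({-1 + s, -1 - s} : Set ℂ) ×ˢ ({-1 + s, -1 - s} : Set ℂ) := by
      ext ⟨x, y⟩
      have hx := Set.ext_iff.mp hR x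
      have hy := Set.ext_iff.mp hR y
      simp only [Set.mem_setOf_eq] at hx hy ⊢
      rw [Set.mem_prod]
      exact and_congr hx hy
    have hfin2 : ∀ a b : ℂ, (({a, b} : Set ℂ) ×ˢ ({a, b} : Set ℂ)).Finite :=
      fun a b => ((Set.finite_singleton b).insert a).prod ((Set.finite_singleton b).insert a)
    have hprod4 : ∀ a b : ℂ, a ≠ b → (({a, b} : Set ℂ) ×ˢ ({a, b} : Set ℂ)).ncard = 4 := by
      intro a b hab
      have h1 : ({a, b} : Set ℂ) ×ˢ ({a, b} : Set ℂ)
          = {(a, a), (a, b), (b, a), (b, b)} := by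
        ext ⟨x, y⟩
        simp only [Set.mem_prod, Set.mem_insert_iff, Set.mem_singleton_iff, Prod.mk.injEq]
        tauto
      rw [h1, Set.ncard_insert_of_notMem (by simp [hab, Ne.symm hab])
          (((Set.finite_singleton _).insert _).insert _),
        Set.ncard_insert_of_notMem (by simp [hab, Ne.symm hab])
          ((Set.finite_singleton _).insert _),
        Set.ncard_pair (by simp [hab])]
    have hdisj : Disjoint (({0, e} : Set ℂ) ×ˢ ({0, e} : Set ℂ))
        (({-1 + s, -1 - s} : Set ℂ) ×ˢ ({-1 + s, -1 - s} : Set ℂ)) := by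
      rw [Set.disjoint_left]
      rintro ⟨x, y⟩ hx hx'
      have h1 : x = 0 ∨ x = e := hx.1
      have h2 : x ^ 2 + 2 * x - e = 0 := by
        have := hx'.1
        rw [← hR] at this
        exact this
      exact dP_nq e he0 he1 x h1 h2
    rw [hset, hT, Set.ncard_union_eq hdisj (hfin2 0 e) (hfin2 _ _),
      hprod4 0 e (Ne.symm he0), hprod4 _ _ hsne]
  · rintro ⟨t, u⟩ hp
    rw [Set.mem_prod] at hp
    obtain ⟨h1, h2⟩ := hp
    simp only [Set.mem_insert_iff, Set.mem_singleton_iff] at h1 h2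
    have h3 : t * (t - e) = 0 := by rcases h1 with rfl | rfl <;> ring
    simp only [delPezzoW']
    rw [div_eq_zero_iff]
    exact Or.inl (by linear_combination (u * (u - e)) * h3)
  · rintro ⟨t, u⟩ ⟨hq1, hq2⟩
    obtain ⟨ht1, ht0, hte⟩ := dP_sqfacts e he0 he1 t hq1
    obtain ⟨hu1, hu0, hue⟩ := dP_sqfacts e he0 he1 u hq2
    simp only [delPezzoW']
    exact div_ne_zero
      (mul_ne_zero (mul_ne_zero (mul_ne_zero ht0 (sub_ne_zero.mpr hte)) hu0)
        (sub_ne_zero.mpr hue))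
      (mul_ne_zero (fun h => ht1 (by linear_combination h))
        (fun h => hu1 (by linear_combination h)))
end

section
/- Let $a_1,a_2$ be nonzero complex numbers and define $f(x_1,x_3,x_4)=x_1+\tfrac{a_1x_3^3}{x_1}+x_3+x_4+\tfrac{a_2x_3^2}{x_4}$ on $(\mathbb{C}^\times)^3$. A point of $(\mathbb{C}^\times)^3$ is a critical point of $f$ if and only if it equals $P_s=\left(-\tfrac{(1+2s)^3}{27a_1},\ \tfrac{(1+2s)^2}{9a_1},\ \tfrac{s(1+2s)^2}{9a_1}\right)$ for some $s\in\mathbb{C}$ with $s^2=a_2$ and $1+2s\neq 0$, and then $f(P_s)=\tfrac{(1+2s)^3}{27a_1}$. In particular, if in addition $a_2\neq 1/4$, then $f$ has exactly two critical points, whose critical values are $\tfrac{1}{a_1}\left(\tfrac{1+2s}{3}\right)^3$ as $s$ ranges over the two square roots of $a_2$. -/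
/-- The superpotential of the affine Hori–Vafa mirror of a genus two curve, in the
coordinates `(x₁, x₃, x₄)` of `(ℂ*)³`. -/
noncomputable def genusTwoW (a₁ a₂ : ℂ) (p : ℂ × ℂ × ℂ) : ℂ :=
  p.1 + a₁ * p.2.1 ^ 3 / p.1 + p.2.1 + p.2.2 + a₂ * p.2.1 ^ 2 / p.2.2

/-- The critical point of the genus two mirror superpotential attached to a square
root `s` of `a₂`. -/
noncomputable def genusTwoCritPt (a₁ s : ℂ) : ℂ × ℂ × ℂ :=
  (-(1 + 2 * s) ^ 3 / (27 * a₁), (1 + 2 * s) ^ 2 / (9 * a₁),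
    s * (1 + 2 * s) ^ 2 / (9 * a₁))

noncomputable def gtD (a₁ a₂ : ℂ) (p : ℂ × ℂ × ℂ) : (ℂ × ℂ × ℂ) →L[ℂ] ℂ :=
  (1 - a₁ * p.2.1 ^ 3 / p.1 ^ 2) • (ContinuousLinearMap.fst ℂ ℂ (ℂ × ℂ))
  + (3 * a₁ * p.2.1 ^ 2 / p.1 + 1 + 2 * a₂ * p.2.1 / p.2.2) •
      ((ContinuousLinearMap.fst ℂ ℂ ℂ).comp (ContinuousLinearMap.snd ℂ ℂ (ℂ × ℂ)))
  + (1 - a₂ * p.2.1 ^ 2 / p.2.2 ^ 2) •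
      ((ContinuousLinearMap.snd ℂ ℂ ℂ).comp (ContinuousLinearMap.snd ℂ ℂ (ℂ × ℂ)))

lemma gtD_apply (a₁ a₂ : ℂ) (p v : ℂ × ℂ × ℂ) :
    gtD a₁ a₂ p v = (1 - a₁ * p.2.1 ^ 3 / p.1 ^ 2) * v.1
      + (3 * a₁ * p.2.1 ^ 2 / p.1 + 1 + 2 * a₂ * p.2.1 / p.2.2) * v.2.1
      + (1 - a₂ * p.2.1 ^ 2 / p.2.2 ^ 2) * v.2.2 := by
  simp [gtD, mul_comm]

lemma gt_hasFDeriv (a₁ a₂ : ℂ) (p : ℂ × ℂ × ℂ) (hx : p.1 ≠ 0) (hz : p.2.2 ≠ 0) :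
    HasFDerivAt (genusTwoW a₁ a₂) (gtD a₁ a₂ p) p := by
  have hfun : genusTwoW a₁ a₂ = fun q : ℂ × ℂ × ℂ =>
      q.1 + a₁ * (q.2.1 * q.2.1 * q.2.1) * q.1⁻¹ + q.2.1 + q.2.2
        + a₂ * (q.2.1 * q.2.1) * q.2.2⁻¹ := by
    funext q; simp only [genusTwoW]; ring
  rw [hfun]
  have h1 : HasFDerivAt (fun q : ℂ × ℂ × ℂ => q.1) (ContinuousLinearMap.fst ℂ ℂ (ℂ × ℂ)) p :=
    hasFDerivAt_fst
  have h2 : HasFDerivAt (fun q : ℂ × ℂ × ℂ => q.2.1)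
      ((ContinuousLinearMap.fst ℂ ℂ ℂ).comp (ContinuousLinearMap.snd ℂ ℂ (ℂ × ℂ))) p :=
    hasFDerivAt_fst.comp p hasFDerivAt_snd
  have h3 : HasFDerivAt (fun q : ℂ × ℂ × ℂ => q.2.2)
      ((ContinuousLinearMap.snd ℂ ℂ ℂ).comp (ContinuousLinearMap.snd ℂ ℂ (ℂ × ℂ))) p :=
    hasFDerivAt_snd.comp p hasFDerivAt_snd
  have hi1 : HasFDerivAt (fun q : ℂ × ℂ × ℂ => q.1⁻¹) _ p :=
    (hasDerivAt_inv hx).comp_hasFDerivAt p h1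
  have hi3 : HasFDerivAt (fun q : ℂ × ℂ × ℂ => q.2.2⁻¹) _ p :=
    (hasDerivAt_inv hz).comp_hasFDerivAt p h3
  have hc1 : HasFDerivAt (fun q : ℂ × ℂ × ℂ => a₁ * (q.2.1 * q.2.1 * q.2.1) * q.1⁻¹) _ p :=
    (((h2.mul h2).mul h2).const_mul a₁).mul hi1
  have hc2 : HasFDerivAt (fun q : ℂ × ℂ × ℂ => a₂ * (q.2.1 * q.2.1) * q.2.2⁻¹) _ p :=
    ((h2.mul h2).const_mul a₂).mul hi3
  have H := ((((h1.add hc1).add h2).add h3).add hc2)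
  refine H.congr_fderiv ?_
  refine ContinuousLinearMap.ext fun v => ?_
  simp only [gtD_apply, ContinuousLinearMap.add_apply, ContinuousLinearMap.smul_apply,
    ContinuousLinearMap.neg_apply, ContinuousLinearMap.comp_apply,
    ContinuousLinearMap.coe_fst', ContinuousLinearMap.coe_snd', smul_eq_mul]
  simp only [Pi.mul_apply, Pi.pow_apply]
  field_simp
  ring

lemma gtD_eq_zero_iff (a₁ a₂ : ℂ) (p : ℂ × ℂ × ℂ) :
    gtD a₁ a₂ p = 0 ↔
      (1 - a₁ * p.2.1 ^ 3 / p.1 ^ 2 = 0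
        ∧ 3 * a₁ * p.2.1 ^ 2 / p.1 + 1 + 2 * a₂ * p.2.1 / p.2.2 = 0
        ∧ 1 - a₂ * p.2.1 ^ 2 / p.2.2 ^ 2 = 0) := by
  constructor
  · intro h
    refine ⟨?_, ?_, ?_⟩
    · have := DFunLike.congr_fun h (1, 0, 0); simpa [gtD_apply] using this
    · have := DFunLike.congr_fun h (0, 1, 0); simpa [gtD_apply] using this
    · have := DFunLike.congr_fun h (0, 0, 1); simpa [gtD_apply] using this
  · rintro ⟨hA, hB, hC⟩
    refine ContinuousLinearMap.ext fun v => ?_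
    rw [gtD_apply, hA, hB, hC]
    simp

lemma crit_pt_mem (a₁ s : ℂ) (ha₁ : a₁ ≠ 0) (hs : s ≠ 0) (h12 : 1 + 2 * s ≠ 0) :
    (genusTwoCritPt a₁ s).1 ≠ 0 ∧ (genusTwoCritPt a₁ s).2.1 ≠ 0 ∧
      (genusTwoCritPt a₁ s).2.2 ≠ 0 := by
  simp only [genusTwoCritPt]
  refine ⟨?_, ?_, ?_⟩ <;>
    simp [div_eq_zero_iff, pow_eq_zero_iff, h12, hs, ha₁]

lemma crit_iff (a₁ a₂ : ℂ) (ha₁ : a₁ ≠ 0) (ha₂ : a₂ ≠ 0) (p : ℂ × ℂ × ℂ)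
    (hx : p.1 ≠ 0) (hy : p.2.1 ≠ 0) (hz : p.2.2 ≠ 0) :
    fderiv ℂ (genusTwoW a₁ a₂) p = 0 ↔
      ∃ s : ℂ, s ^ 2 = a₂ ∧ 1 + 2 * s ≠ 0 ∧ p = genusTwoCritPt a₁ s := by
  rw [(gt_hasFDeriv a₁ a₂ p hx hz).fderiv, gtD_eq_zero_iff]
  obtain ⟨x, y, z⟩ := p
  simp only at hx hy hz ⊢
  constructor
  · rintro ⟨e1, e2, e3⟩
    have E1 : x ^ 2 = a₁ * y ^ 3 := by
      field_simp at e1; linear_combination e1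
    have E3 : z ^ 2 = a₂ * y ^ 2 := by
      field_simp at e3; linear_combination e3
    obtain ⟨s, hzy⟩ : ∃ s, z = s * y := ⟨z / y, (div_mul_cancel₀ z hy).symm⟩
    have hs2 : s ^ 2 = a₂ := by
      have key : s ^ 2 * y ^ 2 = a₂ * y ^ 2 := by
        linear_combination E3 - (z + s * y) * hzy
      exact mul_right_cancel₀ (pow_ne_zero 2 hy) key
    have hsne : s ≠ 0 := by
      intro h; apply ha₂; rw [← hs2, h]; ring
    have E2 : 3 * a₁ * y ^ 2 * z + x * z + 2 * a₂ * x * y = 0 := by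
      field_simp at e2; linear_combination e2
    have hF : x * (1 + 2 * s) = -(3 * a₁ * y ^ 2) := by
      have key : (s * y) * (x * (1 + 2 * s)) = (s * y) * (-(3 * a₁ * y ^ 2)) := by
        linear_combination E2 - (3 * a₁ * y ^ 2 + x) * hzy + 2 * x * y * hs2
      exact mul_left_cancel₀ (mul_ne_zero hsne hy) key
    have h12 : 1 + 2 * s ≠ 0 := by
      intro h0
      have : 3 * a₁ * y ^ 2 = 0 := by linear_combination hF - x * h0
      have := mul_eq_zero.mp this
      rcases this with h | h
      · rcases mul_eq_zero.mp h with h | h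
        · norm_num at h
        · exact ha₁ h
      · exact hy (pow_eq_zero_iff (by norm_num) |>.mp h)
    have hyv : 9 * a₁ * y = (1 + 2 * s) ^ 2 := by
      have key : (a₁ * y ^ 3) * (9 * a₁ * y) = (a₁ * y ^ 3) * ((1 + 2 * s) ^ 2) := by
        linear_combination (3 * a₁ * y ^ 2 - x * (1 + 2 * s)) * hF + (1 + 2 * s) ^ 2 * E1
      exact mul_left_cancel₀ (mul_ne_zero ha₁ (pow_ne_zero 3 hy)) key
    refine ⟨s, hs2, h12, ?_⟩
    have hy_eq : y = (1 + 2 * s) ^ 2 / (9 * a₁) := by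
      rw [eq_div_iff (by simp [ha₁])]; linear_combination hyv
    have hx_eq : x = -(1 + 2 * s) ^ 3 / (27 * a₁) := by
      rw [eq_div_iff (by simp [ha₁])]
      have key : (x * (27 * a₁)) * (1 + 2 * s) = (-(1 + 2 * s) ^ 3) * (1 + 2 * s) := by
        linear_combination 27 * a₁ * hF - ((1 + 2 * s) ^ 2 + 9 * a₁ * y) * hyv
      exact mul_right_cancel₀ h12 key
    have hz_eq : z = s * (1 + 2 * s) ^ 2 / (9 * a₁) := by
      rw [eq_div_iff (by simp [ha₁])]; linear_combination 9 * a₁ * hzy + s * hyv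
    simp only [genusTwoCritPt, Prod.mk.injEq]
    exact ⟨hx_eq, hy_eq, hz_eq⟩
  · rintro ⟨s, hs2, h12, hp⟩
    subst hs2
    simp only [genusTwoCritPt, Prod.mk.injEq] at hp
    obtain ⟨hx_eq, hy_eq, hz_eq⟩ := hp
    subst hx_eq; subst hy_eq; subst hz_eq
    have hsne : s ≠ 0 := by intro h; apply ha₂; rw [h]; ring
    have h12' : 1 + s * 2 ≠ 0 := by rwa [mul_comm]
    refine ⟨?_, ?_, ?_⟩ <;> [skip; skip; skip] <;>
      · field_simp
        ring

lemma crit_val (a₁ s : ℂ) (ha₁ : a₁ ≠ 0) (hs : s ≠ 0) (h12 : 1 + 2 * s ≠ 0) :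
    genusTwoW a₁ (s ^ 2) (genusTwoCritPt a₁ s) = (1 + 2 * s) ^ 3 / (27 * a₁) := by
  simp only [genusTwoW, genusTwoCritPt]
  have h27 : (27:ℂ) * a₁ ≠ 0 := by simp [ha₁]
  have h9 : (9:ℂ) * a₁ ≠ 0 := by simp [ha₁]
  have hxne : -(1 + 2 * s) ^ 3 / (27 * a₁) ≠ 0 := by
    apply div_ne_zero _ h27; simpa using pow_ne_zero 3 h12
  have hzne : s * (1 + 2 * s) ^ 2 / (9 * a₁) ≠ 0 := by
    apply div_ne_zero _ h9; exact mul_ne_zero hs (pow_ne_zero 2 h12)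
  have e2 : a₁ * ((1 + 2 * s) ^ 2 / (9 * a₁)) ^ 3 / (-(1 + 2 * s) ^ 3 / (27 * a₁))
      = -((1 + 2 * s) ^ 3 / (27 * a₁)) := by
    rw [div_eq_iff hxne]; field_simp; ring
  have e5 : s ^ 2 * ((1 + 2 * s) ^ 2 / (9 * a₁)) ^ 2 / (s * (1 + 2 * s) ^ 2 / (9 * a₁))
      = s * (1 + 2 * s) ^ 2 / (9 * a₁) := by
    rw [div_eq_iff hzne]; field_simp
  rw [e2, e5]
  have ha₁5 : a₁ ^ 5 * a₁⁻¹ ^ 5 = 1 := by rw [← mul_pow, mul_inv_cancel₀ ha₁, one_pow]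
  field_simp
  ring


theorem stmt6 (a₁ a₂ : ℂ) (ha₁ : a₁ ≠ 0) (ha₂ : a₂ ≠ 0) :
    (∀ p ∈ {p : ℂ × ℂ × ℂ | p.1 ≠ 0 ∧ p.2.1 ≠ 0 ∧ p.2.2 ≠ 0},
      (fderiv ℂ (genusTwoW a₁ a₂) p = 0 ↔
        ∃ s : ℂ, s ^ 2 = a₂ ∧ 1 + 2 * s ≠ 0 ∧ p = genusTwoCritPt a₁ s)) ∧
    (∀ s : ℂ, s ^ 2 = a₂ → 1 + 2 * s ≠ 0 →
      genusTwoW a₁ a₂ (genusTwoCritPt a₁ s) = (1 + 2 * s) ^ 3 / (27 * a₁)) ∧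
    (a₂ ≠ 1/4 →
      {p : ℂ × ℂ × ℂ | (p.1 ≠ 0 ∧ p.2.1 ≠ 0 ∧ p.2.2 ≠ 0) ∧
          fderiv ℂ (genusTwoW a₁ a₂) p = 0}.ncard = 2 ∧
      (genusTwoW a₁ a₂) ''
          {p : ℂ × ℂ × ℂ | (p.1 ≠ 0 ∧ p.2.1 ≠ 0 ∧ p.2.2 ≠ 0) ∧
            fderiv ℂ (genusTwoW a₁ a₂) p = 0}
        = {v : ℂ | ∃ s : ℂ, s ^ 2 = a₂ ∧ v = (1 / a₁) * ((1 + 2 * s) / 3) ^ 3}) := by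
  have hsne : ∀ s : ℂ, s ^ 2 = a₂ → s ≠ 0 := by
    intro s hs h; apply ha₂; rw [← hs, h]; ring
  have part2 : ∀ s : ℂ, s ^ 2 = a₂ → 1 + 2 * s ≠ 0 →
      genusTwoW a₁ a₂ (genusTwoCritPt a₁ s) = (1 + 2 * s) ^ 3 / (27 * a₁) := by
    intro s hs h12
    have := hsne s hs
    subst hs
    exact crit_val a₁ s ha₁ this h12
  refine ⟨fun p hp => crit_iff a₁ a₂ ha₁ ha₂ p hp.1 hp.2.1 hp.2.2, part2, ?_⟩
  intro ha
  have h12s : ∀ s : ℂ, s ^ 2 = a₂ → 1 + 2 * s ≠ 0 := by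
    intro s hs h
    apply ha
    rw [← hs]
    have : s = -(1/2) := by linear_combination h / 2
    rw [this]; norm_num
  obtain ⟨r, hr⟩ := IsAlgClosed.exists_pow_nat_eq a₂ (n := 2) (by norm_num)
  have memS : ∀ s : ℂ, s ^ 2 = a₂ →
      genusTwoCritPt a₁ s ∈ {p : ℂ × ℂ × ℂ | (p.1 ≠ 0 ∧ p.2.1 ≠ 0 ∧ p.2.2 ≠ 0) ∧
        fderiv ℂ (genusTwoW a₁ a₂) p = 0} := by
    intro s hs
    have hmem := crit_pt_mem a₁ s ha₁ (hsne s hs) (h12s s hs)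
    refine ⟨hmem, ?_⟩
    rw [crit_iff a₁ a₂ ha₁ ha₂ _ hmem.1 hmem.2.1 hmem.2.2]
    exact ⟨s, hs, h12s s hs, rfl⟩
  have hSeq : {p : ℂ × ℂ × ℂ | (p.1 ≠ 0 ∧ p.2.1 ≠ 0 ∧ p.2.2 ≠ 0) ∧
      fderiv ℂ (genusTwoW a₁ a₂) p = 0}
      = {genusTwoCritPt a₁ r, genusTwoCritPt a₁ (-r)} := by
    ext p
    constructor
    · rintro ⟨hcond, hcrit⟩
      obtain ⟨s, hs, h12, rfl⟩ :=
        (crit_iff a₁ a₂ ha₁ ha₂ p hcond.1 hcond.2.1 hcond.2.2).mp hcrit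
      have : (s - r) * (s + r) = 0 := by linear_combination hs - hr
      rcases mul_eq_zero.mp this with h | h
      · rw [sub_eq_zero.mp h]; exact Set.mem_insert _ _
      · rw [show s = -r by linear_combination h]
        exact Set.mem_insert_of_mem _ rfl
    · rintro (rfl | rfl)
      · exact memS r hr
      · exact memS (-r) (by rw [← hr]; ring)
  constructor
  · rw [hSeq]
    apply Set.ncard_pair
    intro h
    have h2 := congrArg (fun q : ℂ × ℂ × ℂ => q.2.1) h
    simp only [genusTwoCritPt] at h2
    have h3 : (1 + 2 * r) ^ 2 = (1 + 2 * (-r)) ^ 2 := by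
      field_simp at h2
      linear_combination h2
    have : r = 0 := by linear_combination h3 / 8
    exact hsne r hr this
  · ext v
    simp only [Set.mem_image, Set.mem_setOf_eq]
    constructor
    · rintro ⟨p, ⟨hcond, hcrit⟩, rfl⟩
      obtain ⟨s, hs, h12, rfl⟩ :=
        (crit_iff a₁ a₂ ha₁ ha₂ p hcond.1 hcond.2.1 hcond.2.2).mp hcrit
      refine ⟨s, hs, ?_⟩
      rw [part2 s hs h12]; ring
    · rintro ⟨s, hs, rfl⟩
      refine ⟨genusTwoCritPt a₁ s, memS s hs, ?_⟩
      rw [part2 s hs (h12s s hs)]; ring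
end

section
/- Let $k\ge 3$ be an integer, let $a_1,a_2$ be nonzero complex numbers, and define $f_k(x_1,x_3,x_4)=x_1+\tfrac{a_1x_3^k}{x_1}+x_3+x_4+\tfrac{a_2x_3^2}{x_4}$ on $(\mathbb{C}^\times)^3$. If $(x_1,x_3,x_4)$ is a critical point of $f_k$, then there exists $s\in\mathbb{C}$ with $s^2=a_2$ such that $x_4=sx_3$, $x_3+kx_1+2x_4=0$, $f_k(x_1,x_3,x_4)=-(k-2)x_1$, and $\left(f_k(x_1,x_3,x_4)\right)^{k-2}=\tfrac{(k-2)^{k-2}(1+2s)^k}{k^k\,a_1}$. Moreover, the set of critical points of $f_k$ is finite with at most $2(k-2)$ elements. -/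
/-- The superpotential of the affine Hori–Vafa mirror of a hyperelliptic curve of
genus `k-1`, in the coordinates `(x₁, x₃, x₄)` of `(ℂ*)³`. -/
noncomputable def hyperellW (k : ℕ) (a₁ a₂ : ℂ) (p : ℂ × ℂ × ℂ) : ℂ :=
  p.1 + a₁ * p.2.1 ^ k / p.1 + p.2.1 + p.2.2 + a₂ * p.2.1 ^ 2 / p.2.2

lemma hyperell_diff (k : ℕ) (a₁ a₂ : ℂ) (p : ℂ × ℂ × ℂ)
    (h1 : p.1 ≠ 0) (h4 : p.2.2 ≠ 0) :
    DifferentiableAt ℂ (hyperellW k a₁ a₂) p := by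
  have d1 : DifferentiableAt ℂ (fun q : ℂ × ℂ × ℂ => q.1) p := differentiableAt_fst
  have d3 : DifferentiableAt ℂ (fun q : ℂ × ℂ × ℂ => q.2.1) p :=
    (differentiableAt_snd (𝕜 := ℂ) (p := p)).fst
  have d4 : DifferentiableAt ℂ (fun q : ℂ × ℂ × ℂ => q.2.2) p :=
    (differentiableAt_snd (𝕜 := ℂ) (p := p)).snd
  unfold hyperellW
  simp only [div_eq_mul_inv]
  exact (((d1.add (((d3.pow k).const_mul a₁).mul (d1.inv h1))).add d3).add d4).add
    (((d3.pow 2).const_mul a₂).mul (d4.inv h4))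

lemma crit_eqs (m : ℕ) (a₁ a₂ : ℂ) (p : ℂ × ℂ × ℂ)
    (h1 : p.1 ≠ 0) (h3 : p.2.1 ≠ 0) (h4 : p.2.2 ≠ 0)
    (hcrit : fderiv ℂ (hyperellW (m + 3) a₁ a₂) p = 0) :
    p.1 ^ 2 = a₁ * p.2.1 ^ (m + 3) ∧ p.2.2 ^ 2 = a₂ * p.2.1 ^ 2 ∧
      p.2.1 + ((m : ℂ) + 3) * p.1 + 2 * p.2.2 = 0 := by
  obtain ⟨x₁, x₃, x₄⟩ := p
  simp only at h1 h3 h4 ⊢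
  have hdiff := hyperell_diff (m + 3) a₁ a₂ (x₁, x₃, x₄) h1 h4
  have hF : HasFDerivAt (hyperellW (m + 3) a₁ a₂)
      (0 : (ℂ × ℂ × ℂ) →L[ℂ] ℂ) (x₁, x₃, x₄) := by
    have := hdiff.hasFDerivAt
    rwa [hcrit] at this
  have hι1 : HasDerivAt (fun t : ℂ => (t, x₃, x₄)) ((1 : ℂ), (0 : ℂ), (0 : ℂ)) x₁ :=
    (hasDerivAt_id x₁).prodMk (hasDerivAt_const _ _)
  have hg1 : HasDerivAt (fun t : ℂ => hyperellW (m + 3) a₁ a₂ (t, x₃, x₄)) 0 x₁ := by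
    have h := hF.comp_hasDerivAt x₁ hι1
    rw [ContinuousLinearMap.zero_apply] at h
    exact h
  have hg1' : HasDerivAt (fun t : ℂ => hyperellW (m + 3) a₁ a₂ (t, x₃, x₄))
      (1 + (0 * x₁ - a₁ * x₃ ^ (m + 3) * 1) / x₁ ^ 2) x₁ := by
    have : HasDerivAt (fun t : ℂ => t + a₁ * x₃ ^ (m + 3) / t + x₃ + x₄ + a₂ * x₃ ^ 2 / x₄)
        (1 + (0 * x₁ - a₁ * x₃ ^ (m + 3) * 1) / x₁ ^ 2) x₁ :=
      ((((hasDerivAt_id x₁).add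
        ((hasDerivAt_const x₁ (a₁ * x₃ ^ (m + 3))).div (hasDerivAt_id x₁) h1)).add_const
          x₃).add_const x₄).add_const (a₂ * x₃ ^ 2 / x₄)
    exact this
  have e1 : 1 + (0 * x₁ - a₁ * x₃ ^ (m + 3) * 1) / x₁ ^ 2 = 0 := hg1'.unique hg1
  have hι3 : HasDerivAt (fun t : ℂ => (x₁, t, x₄)) ((0 : ℂ), (1 : ℂ), (0 : ℂ)) x₃ :=
    (hasDerivAt_const _ _).prodMk ((hasDerivAt_id x₃).prodMk (hasDerivAt_const _ _))
  have hg3 : HasDerivAt (fun t : ℂ => hyperellW (m + 3) a₁ a₂ (x₁, t, x₄)) 0 x₃ := by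
    have h := hF.comp_hasDerivAt x₃ hι3
    rw [ContinuousLinearMap.zero_apply] at h
    exact h
  have hg3' : HasDerivAt (fun t : ℂ => hyperellW (m + 3) a₁ a₂ (x₁, t, x₄))
      (0 + a₁ * (((m : ℂ) + 3) * x₃ ^ (m + 3 - 1)) / x₁ + 1 + a₂ * (2 * x₃ ^ 1) / x₄) x₃ := by
    have : HasDerivAt (fun t : ℂ => x₁ + a₁ * t ^ (m + 3) / x₁ + t + x₄ + a₂ * t ^ 2 / x₄)
        (0 + a₁ * (((m : ℂ) + 3) * x₃ ^ (m + 3 - 1)) / x₁ + 1 + a₂ * (2 * x₃ ^ 1) / x₄) x₃ := by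
      have hp3 : HasDerivAt (fun t : ℂ => a₁ * t ^ (m + 3) / x₁)
          (a₁ * (((m : ℂ) + 3) * x₃ ^ (m + 3 - 1)) / x₁) x₃ := by
        simpa using (((hasDerivAt_pow (m + 3) x₃).const_mul a₁).div_const x₁)
      have hp5 : HasDerivAt (fun t : ℂ => a₂ * t ^ 2 / x₄)
          (a₂ * (2 * x₃ ^ 1) / x₄) x₃ := by
        simpa using (((hasDerivAt_pow 2 x₃).const_mul a₂).div_const x₄)
      exact ((((hasDerivAt_const x₃ x₁).add hp3).add (hasDerivAt_id x₃)).add_const x₄).add hp5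
    exact this
  have e3 : 0 + a₁ * (((m : ℂ) + 3) * x₃ ^ (m + 3 - 1)) / x₁ + 1 + a₂ * (2 * x₃ ^ 1) / x₄ = 0 :=
    hg3'.unique hg3
  have hι4 : HasDerivAt (fun t : ℂ => (x₁, x₃, t)) ((0 : ℂ), (0 : ℂ), (1 : ℂ)) x₄ :=
    (hasDerivAt_const _ _).prodMk ((hasDerivAt_const _ _).prodMk (hasDerivAt_id x₄))
  have hg4 : HasDerivAt (fun t : ℂ => hyperellW (m + 3) a₁ a₂ (x₁, x₃, t)) 0 x₄ := by
    have h := hF.comp_hasDerivAt x₄ hι4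
    rw [ContinuousLinearMap.zero_apply] at h
    exact h
  have hg4' : HasDerivAt (fun t : ℂ => hyperellW (m + 3) a₁ a₂ (x₁, x₃, t))
      (0 + 1 + (0 * x₄ - a₂ * x₃ ^ 2 * 1) / x₄ ^ 2) x₄ := by
    have : HasDerivAt (fun t : ℂ => (x₁ + a₁ * x₃ ^ (m + 3) / x₁ + x₃) + t + a₂ * x₃ ^ 2 / t)
        (0 + 1 + (0 * x₄ - a₂ * x₃ ^ 2 * 1) / x₄ ^ 2) x₄ :=
      ((hasDerivAt_const x₄ _).add (hasDerivAt_id x₄)).add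
        ((hasDerivAt_const x₄ (a₂ * x₃ ^ 2)).div (hasDerivAt_id x₄) h4)
    exact this
  have e4 : 0 + 1 + (0 * x₄ - a₂ * x₃ ^ 2 * 1) / x₄ ^ 2 = 0 := hg4'.unique hg4
  have h31 : m + 3 - 1 = m + 2 := by omega
  rw [h31] at e3
  field_simp at e1 e3 e4
  refine ⟨by linear_combination e1, by linear_combination e4, ?_⟩
  have key : (x₃ + ((m : ℂ) + 3) * x₁ + 2 * x₄) * (x₁ * x₄) = 0 := by
    linear_combination x₃ * e3 + ((m : ℂ) + 3) * x₄ * e1 + 2 * x₁ * e4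
  rcases mul_eq_zero.1 key with h | h
  · exact h
  · exact absurd h (by simp [h1, h4])

lemma master_alg (m : ℕ) (a₁ a₂ x₁ x₃ x₄ : ℂ) (ha₁ : a₁ ≠ 0)
    (h1 : x₁ ≠ 0) (h3 : x₃ ≠ 0) (h4 : x₄ ≠ 0)
    (P1 : x₁ ^ 2 = a₁ * x₃ ^ (m + 3)) (P3 : x₄ ^ 2 = a₂ * x₃ ^ 2)
    (P2 : x₃ + ((m : ℂ) + 3) * x₁ + 2 * x₄ = 0) :
    ∃ s : ℂ, s ^ 2 = a₂ ∧ x₄ = s * x₃ ∧ (1 + 2 * s) ≠ 0 ∧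
      (1 + 2 * s) * x₃ = -((m : ℂ) + 3) * x₁ ∧
      x₁ ^ (m + 1) = (1 + 2 * s) ^ (m + 3) / ((-1) ^ (m + 3) * ((m : ℂ) + 3) ^ (m + 3) * a₁) := by
  have hm3 : ((m : ℂ) + 3) ≠ 0 := by
    have : ((m + 3 : ℕ) : ℂ) ≠ 0 := Nat.cast_ne_zero.2 (by omega)
    push_cast at this; exact this
  have hmul : (1 + 2 * (x₄ / x₃)) * x₃ = x₃ + 2 * x₄ := by field_simp
  have hlin : (1 + 2 * (x₄ / x₃)) * x₃ = -((m : ℂ) + 3) * x₁ := by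
    rw [hmul]; linear_combination P2
  refine ⟨x₄ / x₃, ?_, ?_, ?_, hlin, ?_⟩
  · field_simp
    linear_combination P3
  · field_simp
  · intro h
    rw [h, zero_mul] at hlin
    have h0 : ((m : ℂ) + 3) * x₁ = 0 := by linear_combination hlin
    rcases mul_eq_zero.1 h0 with h' | h'
    · exact hm3 h'
    · exact h1 h'
  · have dne : ((-1 : ℂ)) ^ (m + 3) * ((m : ℂ) + 3) ^ (m + 3) * a₁ ≠ 0 :=
      mul_ne_zero (mul_ne_zero (pow_ne_zero _ (neg_ne_zero.2 one_ne_zero)) (pow_ne_zero _ hm3)) ha₁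
    rw [eq_div_iff dne]
    apply mul_right_cancel₀ (pow_ne_zero (m + 3) h3)
    have hk : (1 + 2 * (x₄ / x₃)) ^ (m + 3) * x₃ ^ (m + 3)
        = (-1) ^ (m + 3) * ((((m : ℂ) + 3)) ^ (m + 3) * x₁ ^ (m + 3)) := by
      rw [← mul_pow, hlin, neg_mul, neg_pow, mul_pow]
    linear_combination -x₁ ^ (m + 1) * (-1 : ℂ) ^ (m + 3) * ((m : ℂ) + 3) ^ (m + 3) * P1 - hk

lemma roots_finite (n : ℕ) (hn : 0 < n) (c : ℂ) :
    {x : ℂ | x ^ n = c}.Finite ∧ {x : ℂ | x ^ n = c}.ncard ≤ n := by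
  have hset : {x : ℂ | x ^ n = c} = ↑(Polynomial.nthRoots n c).toFinset := by
    ext x; simp [Polynomial.mem_nthRoots hn]
  rw [hset]
  exact ⟨Finset.finite_toSet _, by
    rw [Set.ncard_coe_finset]
    exact le_trans (Multiset.toFinset_card_le _) (Polynomial.card_nthRoots n c)⟩

theorem stmt7 (k : ℕ) (hk : 3 ≤ k) (a₁ a₂ : ℂ) (ha₁ : a₁ ≠ 0) (ha₂ : a₂ ≠ 0) :
    (∀ p ∈ {p : ℂ × ℂ × ℂ | p.1 ≠ 0 ∧ p.2.1 ≠ 0 ∧ p.2.2 ≠ 0},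
      fderiv ℂ (hyperellW k a₁ a₂) p = 0 →
        ∃ s : ℂ, s ^ 2 = a₂ ∧ p.2.2 = s * p.2.1 ∧
          p.2.1 + (k : ℂ) * p.1 + 2 * p.2.2 = 0 ∧
          hyperellW k a₁ a₂ p = -((k : ℂ) - 2) * p.1 ∧
          (hyperellW k a₁ a₂ p) ^ (k - 2)
            = ((k : ℂ) - 2) ^ (k - 2) * (1 + 2 * s) ^ k / ((k : ℂ) ^ k * a₁)) ∧
    {p : ℂ × ℂ × ℂ | (p.1 ≠ 0 ∧ p.2.1 ≠ 0 ∧ p.2.2 ≠ 0) ∧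
        fderiv ℂ (hyperellW k a₁ a₂) p = 0}.Finite ∧
    {p : ℂ × ℂ × ℂ | (p.1 ≠ 0 ∧ p.2.1 ≠ 0 ∧ p.2.2 ≠ 0) ∧
        fderiv ℂ (hyperellW k a₁ a₂) p = 0}.ncard ≤ 2 * (k - 2) := by
  obtain ⟨m, rfl⟩ : ∃ m, k = m + 3 := ⟨k - 3, by omega⟩
  have hk2 : m + 3 - 2 = m + 1 := by omega
  have hm3 : ((m : ℂ) + 3) ≠ 0 := by
    have : ((m + 3 : ℕ) : ℂ) ≠ 0 := Nat.cast_ne_zero.2 (by omega)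
    push_cast at this; exact this
  -- key consequence of criticality
  have key : ∀ p : ℂ × ℂ × ℂ, p.1 ≠ 0 → p.2.1 ≠ 0 → p.2.2 ≠ 0 →
      fderiv ℂ (hyperellW (m + 3) a₁ a₂) p = 0 →
      ∃ s : ℂ, s ^ 2 = a₂ ∧ p.2.2 = s * p.2.1 ∧ (1 + 2 * s) ≠ 0 ∧
        (1 + 2 * s) * p.2.1 = -((m : ℂ) + 3) * p.1 ∧
        p.1 ^ (m + 1) = (1 + 2 * s) ^ (m + 3)
          / ((-1) ^ (m + 3) * ((m : ℂ) + 3) ^ (m + 3) * a₁) := by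
    intro p h1 h3 h4 hcrit
    obtain ⟨P1, P3, P2⟩ := crit_eqs m a₁ a₂ p h1 h3 h4 hcrit
    exact master_alg m a₁ a₂ p.1 p.2.1 p.2.2 ha₁ h1 h3 h4 P1 P3 P2
  -- value of W at critical points, given the polynomial identities
  have hWval : ∀ p : ℂ × ℂ × ℂ, p.1 ≠ 0 → p.2.1 ≠ 0 → p.2.2 ≠ 0 →
      ∀ s : ℂ, s ^ 2 = a₂ → p.2.2 = s * p.2.1 →
      p.2.1 + ((m : ℂ) + 3) * p.1 + 2 * p.2.2 = 0 →
      p.1 ^ 2 = a₁ * p.2.1 ^ (m + 3) →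
      hyperellW (m + 3) a₁ a₂ p = -(((m : ℂ) + 3) - 2) * p.1 := by
    intro p h1 h3 h4 s hs2 hx4 P2 P1
    have hs0 : s ≠ 0 := by rintro rfl; rw [← hs2] at ha₂; simp at ha₂
    have t1 : a₁ * p.2.1 ^ (m + 3) / p.1 = p.1 := by
      rw [← P1, sq, mul_div_assoc, div_self h1, mul_one]
    have t2 : a₂ * p.2.1 ^ 2 / p.2.2 = p.2.2 := by
      rw [hx4, ← hs2, div_eq_iff (mul_ne_zero hs0 h3)]; ring
    unfold hyperellW
    rw [t1, t2]
    linear_combination P2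
  refine ⟨?_, ?_⟩
  · -- part 1
    intro p hp hcrit
    obtain ⟨h1, h3, h4⟩ := hp
    obtain ⟨P1, P3, P2⟩ := crit_eqs m a₁ a₂ p h1 h3 h4 hcrit
    obtain ⟨s, hs2, hx4, hsne, hlin, hxpow⟩ := key p h1 h3 h4 hcrit
    have hW := hWval p h1 h3 h4 s hs2 hx4 P2 P1
    refine ⟨s, hs2, hx4, ?_, ?_, ?_⟩
    · push_cast
      exact P2
    · rw [hW]; push_cast; ring
    · rw [hk2, hW]
      have hL : (-(((m : ℂ) + 3) - 2) * p.1) ^ (m + 1)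
          = (-1) ^ (m + 1) * ((((m : ℂ) + 1)) ^ (m + 1) * p.1 ^ (m + 1)) := by
        rw [show -(((m : ℂ) + 3) - 2) * p.1 = -((((m : ℂ) + 1)) * p.1) by ring,
          neg_pow, mul_pow]
      rw [hL, hxpow]
      have hneg : ((-1 : ℂ)) ^ (m + 3) = (-1) ^ (m + 1) := by
        rw [pow_add, pow_add]; ring
      rw [hneg]
      have hne1 : ((-1 : ℂ)) ^ (m + 1) ≠ 0 := pow_ne_zero _ (neg_ne_zero.2 one_ne_zero)
      have hne2 : ((m : ℂ) + 3) ^ (m + 3) ≠ 0 := pow_ne_zero _ hm3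
      push_cast
      field_simp
      ring
  · -- part 2
    obtain ⟨s₀, hs₀⟩ := IsAlgClosed.exists_pow_nat_eq a₂ (n := 2) (by norm_num)
    have hR : ∀ s : ℂ,
        ({x : ℂ | x ^ (m + 1) = (1 + 2 * s) ^ (m + 3)
          / ((-1) ^ (m + 3) * ((m : ℂ) + 3) ^ (m + 3) * a₁)}).Finite ∧
        ({x : ℂ | x ^ (m + 1) = (1 + 2 * s) ^ (m + 3)
          / ((-1) ^ (m + 3) * ((m : ℂ) + 3) ^ (m + 3) * a₁)}).ncard ≤ m + 1 :=
      fun s => roots_finite (m + 1) (by omega) _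
    have hsub : {p : ℂ × ℂ × ℂ | (p.1 ≠ 0 ∧ p.2.1 ≠ 0 ∧ p.2.2 ≠ 0) ∧
          fderiv ℂ (hyperellW (m + 3) a₁ a₂) p = 0} ⊆
        (fun x : ℂ => (x, -((m : ℂ) + 3) * x / (1 + 2 * s₀),
            s₀ * (-((m : ℂ) + 3) * x / (1 + 2 * s₀)))) ''
          {x : ℂ | x ^ (m + 1) = (1 + 2 * s₀) ^ (m + 3)
            / ((-1) ^ (m + 3) * ((m : ℂ) + 3) ^ (m + 3) * a₁)} ∪
        (fun x : ℂ => (x, -((m : ℂ) + 3) * x / (1 + 2 * (-s₀)),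
            (-s₀) * (-((m : ℂ) + 3) * x / (1 + 2 * (-s₀))))) ''
          {x : ℂ | x ^ (m + 1) = (1 + 2 * (-s₀)) ^ (m + 3)
            / ((-1) ^ (m + 3) * ((m : ℂ) + 3) ^ (m + 3) * a₁)} := by
      rintro p ⟨⟨h1, h3, h4⟩, hcrit⟩
      obtain ⟨s, hs2, hx4, hsne, hlin, hxpow⟩ := key p h1 h3 h4 hcrit
      have hss : s = s₀ ∨ s = -s₀ := by
        have h0 : (s - s₀) * (s + s₀) = 0 := by linear_combination hs2 - hs₀
        rcases mul_eq_zero.1 h0 with h | h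
        · left; linear_combination h
        · right; linear_combination h
      have hx3 : -((m : ℂ) + 3) * p.1 / (1 + 2 * s) = p.2.1 := by
        rw [div_eq_iff hsne]; linear_combination -hlin
      have himg : (fun x : ℂ => (x, -((m : ℂ) + 3) * x / (1 + 2 * s),
            s * (-((m : ℂ) + 3) * x / (1 + 2 * s)))) p.1 = p := by
        show (p.1, -((m : ℂ) + 3) * p.1 / (1 + 2 * s),
            s * (-((m : ℂ) + 3) * p.1 / (1 + 2 * s))) = p
        rw [hx3, ← hx4]
      rcases hss with h | h
      · exact Or.inl ⟨p.1, by rw [← h]; exact hxpow, by rw [← h]; exact himg⟩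
      · exact Or.inr ⟨p.1, by rw [← h]; exact hxpow, by rw [← h]; exact himg⟩
    have hUfin : ((fun x : ℂ => (x, -((m : ℂ) + 3) * x / (1 + 2 * s₀),
            s₀ * (-((m : ℂ) + 3) * x / (1 + 2 * s₀)))) ''
          {x : ℂ | x ^ (m + 1) = (1 + 2 * s₀) ^ (m + 3)
            / ((-1) ^ (m + 3) * ((m : ℂ) + 3) ^ (m + 3) * a₁)} ∪
        (fun x : ℂ => (x, -((m : ℂ) + 3) * x / (1 + 2 * (-s₀)),
            (-s₀) * (-((m : ℂ) + 3) * x / (1 + 2 * (-s₀))))) ''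
          {x : ℂ | x ^ (m + 1) = (1 + 2 * (-s₀)) ^ (m + 3)
            / ((-1) ^ (m + 3) * ((m : ℂ) + 3) ^ (m + 3) * a₁)}).Finite :=
      ((hR s₀).1.image _).union ((hR (-s₀)).1.image _)
    refine ⟨hUfin.subset hsub, ?_⟩
    calc {p : ℂ × ℂ × ℂ | (p.1 ≠ 0 ∧ p.2.1 ≠ 0 ∧ p.2.2 ≠ 0) ∧
          fderiv ℂ (hyperellW (m + 3) a₁ a₂) p = 0}.ncard
        ≤ _ := Set.ncard_le_ncard hsub hUfin
      _ ≤ _ + _ := Set.ncard_union_le _ _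
      _ ≤ (m + 1) + (m + 1) :=
          add_le_add (le_trans (Set.ncard_image_le (hR s₀).1) (hR s₀).2)
            (le_trans (Set.ncard_image_le (hR (-s₀)).1) (hR (-s₀)).2)
      _ ≤ 2 * (m + 3 - 2) := by omega
end

section
/- Define the polynomial $F=x_1(x_0-x_1)\,y_1(y_0-y_1)\,z_1(wz_0-z_1)-x_0^2y_0^2z_0^2$ in the seven variables $(x_0,x_1,y_0,y_1,z_0,z_1,w)$. Then $F$ and all seven of its first-order partial derivatives vanish at every point of the following fourteen families: $(0,1,1,0,1,0,w)$, $(0,1,1,0,1,w,w)$, $(0,1,1,1,1,0,w)$, $(0,1,1,1,1,w,w)$, $(1,0,0,1,1,0,w)$, $(1,0,0,1,1,w,w)$, $(1,1,0,1,1,0,w)$, $(1,1,0,1,1,w,w)$, $(1,0,1,0,0,1,w)$, $(1,0,1,1,0,1,w)$, $(1,1,1,0,0,1,w)$, $(1,1,1,1,0,1,w)$ for all $w\in\mathbb{C}$, together with $(0,1,y_0,y_1,1,0,0)$ for all $(y_0,y_1)\in\mathbb{C}^2$ and $(x_0,x_1,0,1,1,0,0)$ for all $(x_0,x_1)\in\mathbb{C}^2$.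 -/
/-- Defining equation of the compactified mirror of the intersection of two
quadrics in `ℙ⁵`, in the variables `(x₀, x₁, y₀, y₁, z₀, z₁, w)`. -/
def quadricsF (v : Fin 7 → ℂ) : ℂ :=
  v 1 * (v 0 - v 1) * v 3 * (v 2 - v 3) * v 5 * (v 6 * v 4 - v 5) -
    v 0 ^ 2 * v 2 ^ 2 * v 4 ^ 2

/-- `p` is a singular point of the hypersurface `F = 0`: both `F` and all its
first-order partial derivatives vanish at `p`. -/
def IsSingPt (F : (Fin 7 → ℂ) → ℂ) (p : Fin 7 → ℂ) : Prop :=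
  F p = 0 ∧ ∀ i : Fin 7, fderiv ℂ F p (Pi.single i 1) = 0

@[simp] lemma vec7_0 (a b c d e f g : ℂ) : ![a,b,c,d,e,f,g] 0 = a := rfl
@[simp] lemma vec7_1 (a b c d e f g : ℂ) : ![a,b,c,d,e,f,g] 1 = b := rfl
@[simp] lemma vec7_2 (a b c d e f g : ℂ) : ![a,b,c,d,e,f,g] 2 = c := rfl
@[simp] lemma vec7_3 (a b c d e f g : ℂ) : ![a,b,c,d,e,f,g] 3 = d := rfl
@[simp] lemma vec7_4 (a b c d e f g : ℂ) : ![a,b,c,d,e,f,g] 4 = e := rfl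
@[simp] lemma vec7_5 (a b c d e f g : ℂ) : ![a,b,c,d,e,f,g] 5 = f := rfl
@[simp] lemma vec7_6 (a b c d e f g : ℂ) : ![a,b,c,d,e,f,g] 6 = g := rfl

lemma quadricsF_fderiv (p w : Fin 7 → ℂ) :
    fderiv ℂ quadricsF p w =
      (w 1 * (p 0 - p 1) * p 3 * (p 2 - p 3) * p 5 * (p 6 * p 4 - p 5)
      + p 1 * (w 0 - w 1) * p 3 * (p 2 - p 3) * p 5 * (p 6 * p 4 - p 5)
      + p 1 * (p 0 - p 1) * w 3 * (p 2 - p 3) * p 5 * (p 6 * p 4 - p 5)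
      + p 1 * (p 0 - p 1) * p 3 * (w 2 - w 3) * p 5 * (p 6 * p 4 - p 5)
      + p 1 * (p 0 - p 1) * p 3 * (p 2 - p 3) * w 5 * (p 6 * p 4 - p 5)
      + p 1 * (p 0 - p 1) * p 3 * (p 2 - p 3) * p 5 * (w 6 * p 4 + p 6 * w 4 - w 5))
      - (2 * p 0 * w 0 * p 2 ^ 2 * p 4 ^ 2
        + p 0 ^ 2 * 2 * p 2 * w 2 * p 4 ^ 2
        + p 0 ^ 2 * p 2 ^ 2 * 2 * p 4 * w 4) := by
  have h0 := hasFDerivAt_apply (𝕜 := ℂ) (0 : Fin 7) p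
  have h1 := hasFDerivAt_apply (𝕜 := ℂ) (1 : Fin 7) p
  have h2 := hasFDerivAt_apply (𝕜 := ℂ) (2 : Fin 7) p
  have h3 := hasFDerivAt_apply (𝕜 := ℂ) (3 : Fin 7) p
  have h4 := hasFDerivAt_apply (𝕜 := ℂ) (4 : Fin 7) p
  have h5 := hasFDerivAt_apply (𝕜 := ℂ) (5 : Fin 7) p
  have h6 := hasFDerivAt_apply (𝕜 := ℂ) (6 : Fin 7) p
  have hfun : quadricsF = fun v : Fin 7 → ℂ =>
      v 1 * (v 0 - v 1) * v 3 * (v 2 - v 3) * v 5 * (v 6 * v 4 - v 5) -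
        v 0 * v 0 * (v 2 * v 2) * (v 4 * v 4) := by
    funext v; simp only [quadricsF]; ring
  have hF : HasFDerivAt (fun v : Fin 7 → ℂ =>
      v 1 * (v 0 - v 1) * v 3 * (v 2 - v 3) * v 5 * (v 6 * v 4 - v 5) -
        v 0 * v 0 * (v 2 * v 2) * (v 4 * v 4)) _ p :=
    (((((h1.mul (h0.sub h1)).mul h3).mul (h2.sub h3)).mul h5).mul
        ((h6.mul h4).sub h5)).sub (((h0.mul h0).mul (h2.mul h2)).mul (h4.mul h4))
  rw [hfun, hF.fderiv]
  simp only [ContinuousLinearMap.add_apply, ContinuousLinearMap.sub_apply,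
    ContinuousLinearMap.smul_apply, ContinuousLinearMap.proj_apply, smul_eq_mul,
    Pi.mul_apply, Pi.sub_apply]
  ring

theorem stmt9 :
    (∀ w : ℂ,
      ∀ p ∈ ({![0, 1, 1, 0, 1, 0, w], ![0, 1, 1, 0, 1, w, w],
              ![0, 1, 1, 1, 1, 0, w], ![0, 1, 1, 1, 1, w, w],
              ![1, 0, 0, 1, 1, 0, w], ![1, 0, 0, 1, 1, w, w],
              ![1, 1, 0, 1, 1, 0, w], ![1, 1, 0, 1, 1, w, w],
              ![1, 0, 1, 0, 0, 1, w], ![1, 0, 1, 1, 0, 1, w],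
              ![1, 1, 1, 0, 0, 1, w], ![1, 1, 1, 1, 0, 1, w]} :
          Set (Fin 7 → ℂ)),
        IsSingPt quadricsF p) ∧
    (∀ y₀ y₁ : ℂ, IsSingPt quadricsF ![0, 1, y₀, y₁, 1, 0, 0]) ∧
    (∀ x₀ x₁ : ℂ, IsSingPt quadricsF ![x₀, x₁, 0, 1, 1, 0, 0]) := by
  refine ⟨fun w p hp => ?_, fun y₀ y₁ => ?_, fun x₀ x₁ => ?_⟩
  · simp only [Set.mem_insert_iff, Set.mem_singleton_iff] at hp
    rcases hp with h|h|h|h|h|h|h|h|h|h|h|h <;> subst h <;>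
      refine ⟨by simp [quadricsF] <;> ring_nf, fun i => ?_⟩ <;>
      rw [quadricsF_fderiv] <;> fin_cases i <;>
      simp [Pi.single_apply] <;> ring_nf
  · refine ⟨by simp [quadricsF], fun i => ?_⟩
    rw [quadricsF_fderiv]; fin_cases i <;> simp [Pi.single_apply] <;> ring_nf
  · refine ⟨by simp [quadricsF], fun i => ?_⟩
    rw [quadricsF_fderiv]; fin_cases i <;> simp [Pi.single_apply] <;> ring_nf
end

section
/- Define $g(x_1,x_3,x_5)=x_5+\tfrac{1}{x_1(1+x_1)x_3(1+x_3)x_5}$ on the open set $\{(x_1,x_3,x_5)\in\mathbb{C}^3 : x_1(1+x_1)x_3(1+x_3)x_5\neq 0\}$. Then $g$ has exactly two critical points, namely $(-1/2,-1/2,4)$ and $(-1/2,-1/2,-4)$, with critical values $g(-1/2,-1/2,4)=8$ and $g(-1/2,-1/2,-4)=-8$. -/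
noncomputable def fanoW (p : ℂ × ℂ × ℂ) : ℂ :=
  p.2.2 + 1 / (p.1 * (1 + p.1) * p.2.1 * (1 + p.2.1) * p.2.2)

private lemma diffAt {a b c : ℂ} (hD : a * (1 + a) * b * (1 + b) * c ≠ 0) :
    DifferentiableAt ℂ fanoW (a, b, c) := by
  have h : DifferentiableAt ℂ
      (fun p : ℂ × ℂ × ℂ => p.1 * (1 + p.1) * p.2.1 * (1 + p.2.1) * p.2.2) (a, b, c) := by
    fun_prop
  have h2 : DifferentiableAt ℂ
      (fun p : ℂ × ℂ × ℂ => (p.1 * (1 + p.1) * p.2.1 * (1 + p.2.1) * p.2.2)⁻¹) (a, b, c) :=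
    h.inv (by exact hD)
  have he : fanoW = fun p : ℂ × ℂ × ℂ =>
      p.2.2 + (p.1 * (1 + p.1) * p.2.1 * (1 + p.2.1) * p.2.2)⁻¹ := by
    funext p; simp [fanoW, one_div]
  rw [he]
  exact differentiableAt_snd.snd.add h2

private lemma partial1 {a b c : ℂ} (hD : a * (1 + a) * b * (1 + b) * c ≠ 0) :
    fderiv ℂ fanoW (a, b, c) (1, 0, 0)
      = -((1 + 2*a) / ((a*(1+a))^2 * (b*(1+b)) * c)) := by
  have ha : a ≠ 0 := fun h => hD (by rw [h]; ring)
  have ha' : (1:ℂ) + a ≠ 0 := fun h => hD (by rw [show a*(1+a) = (1+a)*a by ring, h]; ring)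
  have hb : b ≠ 0 := fun h => hD (by rw [h]; ring)
  have hb' : (1:ℂ) + b ≠ 0 := fun h => hD (by
    have : a * (1 + a) * b * (1 + b) * c = (1+b) * (a*(1+a)*b*c) := by ring
    rw [this, h]; ring)
  have hc : c ≠ 0 := fun h => hD (by rw [h]; ring)
  have hline : HasDerivAt (fun t : ℂ => ((t, b, c) : ℂ × ℂ × ℂ)) ((1:ℂ), (0:ℂ), (0:ℂ)) a :=
    HasDerivAt.prodMk (hasDerivAt_id a) (HasDerivAt.prodMk (hasDerivAt_const a b) (hasDerivAt_const a c))
  have h1 : HasDerivAt (fun t : ℂ => fanoW (t, b, c))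
      (fderiv ℂ fanoW (a, b, c) (1, 0, 0)) a :=
    by have := HasFDerivAt.comp_hasDerivAt a (diffAt hD).hasFDerivAt hline; exact this
  have hu : HasDerivAt (fun t : ℂ => t * (1 + t) * b * (1 + b) * c)
      ((((1*(1+a) + a*(0+1)) * b) * (1+b)) * c) a :=
    ((((hasDerivAt_id a).mul ((hasDerivAt_const a 1).add (hasDerivAt_id a))).mul_const b).mul_const (1+b)).mul_const c
  have h2 : HasDerivAt (fun t : ℂ => c + (t * (1 + t) * b * (1 + b) * c)⁻¹)
      (-((((1*(1+a) + a*(0+1)) * b) * (1+b)) * c) / (a * (1 + a) * b * (1 + b) * c)^2) a :=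
    (hu.inv hD).const_add c
  simp only [fanoW, one_div] at h1
  have := h1.unique h2
  rw [this]
  field_simp
  ring

private lemma partial2 {a b c : ℂ} (hD : a * (1 + a) * b * (1 + b) * c ≠ 0) :
    fderiv ℂ fanoW (a, b, c) (0, 1, 0)
      = -((1 + 2*b) / ((b*(1+b))^2 * (a*(1+a)) * c)) := by
  have ha : a ≠ 0 := fun h => hD (by rw [h]; ring)
  have ha' : (1:ℂ) + a ≠ 0 := fun h => hD (by rw [show a*(1+a) = (1+a)*a by ring, h]; ring)
  have hb : b ≠ 0 := fun h => hD (by rw [h]; ring)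
  have hb' : (1:ℂ) + b ≠ 0 := fun h => hD (by
    have : a * (1 + a) * b * (1 + b) * c = (1+b) * (a*(1+a)*b*c) := by ring
    rw [this, h]; ring)
  have hc : c ≠ 0 := fun h => hD (by rw [h]; ring)
  have hline : HasDerivAt (fun t : ℂ => ((a, t, c) : ℂ × ℂ × ℂ)) ((0:ℂ), (1:ℂ), (0:ℂ)) b :=
    HasDerivAt.prodMk (hasDerivAt_const b a) (HasDerivAt.prodMk (hasDerivAt_id b) (hasDerivAt_const b c))
  have h1 : HasDerivAt (fun t : ℂ => fanoW (a, t, c))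
      (fderiv ℂ fanoW (a, b, c) (0, 1, 0)) b :=
    by have := HasFDerivAt.comp_hasDerivAt b (diffAt hD).hasFDerivAt hline; exact this
  have hu : HasDerivAt (fun t : ℂ => a * (1 + a) * t * (1 + t) * c)
      ((((a*(1+a))*1) * (1+b) + (a*(1+a)*b) * (0+1)) * c) b := by
    exact ((((hasDerivAt_id b).const_mul (a*(1+a))).mul ((hasDerivAt_const b 1).add (hasDerivAt_id b))).mul_const c)
  have h2 : HasDerivAt (fun t : ℂ => c + (a * (1 + a) * t * (1 + t) * c)⁻¹)
      (-((((a*(1+a))*1) * (1+b) + (a*(1+a)*b) * (0+1)) * c) / (a * (1 + a) * b * (1 + b) * c)^2) b :=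
    (hu.inv hD).const_add c
  simp only [fanoW, one_div] at h1
  have := h1.unique h2
  rw [this]
  field_simp
  ring

private lemma partial3 {a b c : ℂ} (hD : a * (1 + a) * b * (1 + b) * c ≠ 0) :
    fderiv ℂ fanoW (a, b, c) (0, 0, 1)
      = 1 - 1 / ((a*(1+a)) * (b*(1+b)) * c^2) := by
  have hline : HasDerivAt (fun t : ℂ => ((a, b, t) : ℂ × ℂ × ℂ)) ((0:ℂ), (0:ℂ), (1:ℂ)) c :=
    HasDerivAt.prodMk (hasDerivAt_const c a) (HasDerivAt.prodMk (hasDerivAt_const c b) (hasDerivAt_id c))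
  have h1 : HasDerivAt (fun t : ℂ => fanoW (a, b, t))
      (fderiv ℂ fanoW (a, b, c) (0, 0, 1)) c :=
    by have := HasFDerivAt.comp_hasDerivAt c (diffAt hD).hasFDerivAt hline; exact this
  have hu : HasDerivAt (fun t : ℂ => a * (1 + a) * b * (1 + b) * t)
      (a * (1 + a) * b * (1 + b) * 1) c :=
    (hasDerivAt_id c).const_mul (a * (1 + a) * b * (1 + b))
  have h2 : HasDerivAt (fun t : ℂ => t + (a * (1 + a) * b * (1 + b) * t)⁻¹)
      (1 + -(a * (1 + a) * b * (1 + b) * 1) / (a * (1 + a) * b * (1 + b) * c)^2) c :=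
    (hasDerivAt_id c).add (hu.inv hD)
  simp only [fanoW, one_div] at h1
  have := h1.unique h2
  rw [this]
  have ha : a ≠ 0 := fun h => hD (by rw [h]; ring)
  have ha' : (1:ℂ) + a ≠ 0 := fun h => hD (by rw [show a*(1+a) = (1+a)*a by ring, h]; ring)
  have hb : b ≠ 0 := fun h => hD (by rw [h]; ring)
  have hb' : (1:ℂ) + b ≠ 0 := fun h => hD (by
    have : a * (1 + a) * b * (1 + b) * c = (1+b) * (a*(1+a)*b*c) := by ring
    rw [this, h]; ring)
  have hc : c ≠ 0 := fun h => hD (by rw [h]; ring)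
  field_simp
  ring

private lemma clm_zero_s11 (L : (ℂ × ℂ × ℂ) →L[ℂ] ℂ)
    (h1 : L (1, 0, 0) = 0) (h2 : L (0, 1, 0) = 0) (h3 : L (0, 0, 1) = 0) : L = 0 := by
  apply ContinuousLinearMap.ext
  rintro ⟨x, y, z⟩
  have e : ((x, y, z) : ℂ × ℂ × ℂ)
      = x • ((1:ℂ), (0:ℂ), (0:ℂ)) + y • ((0:ℂ), (1:ℂ), (0:ℂ)) + z • ((0:ℂ), (0:ℂ), (1:ℂ)) := by
    simp [Prod.ext_iff]
  rw [e, map_add, map_add, map_smul, map_smul, map_smul, h1, h2, h3]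
  simp

theorem stmt11 :
    {p : ℂ × ℂ × ℂ | p.1 * (1 + p.1) * p.2.1 * (1 + p.2.1) * p.2.2 ≠ 0 ∧
        fderiv ℂ fanoW p = 0}
      = {(-1/2, -1/2, 4), (-1/2, -1/2, -4)} ∧
    fanoW (-1/2, -1/2, 4) = 8 ∧ fanoW (-1/2, -1/2, -4) = -8 := by
  refine ⟨?_, by norm_num [fanoW], by norm_num [fanoW]⟩
  ext ⟨a, b, c⟩
  simp only [Set.mem_setOf_eq, Set.mem_insert_iff, Set.mem_singleton_iff, Prod.mk.injEq]
  constructor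
  · rintro ⟨hD, hf⟩
    have ha : a ≠ 0 := fun h => hD (by rw [h]; ring)
    have ha' : (1:ℂ) + a ≠ 0 := fun h => hD (by rw [show a*(1+a) = (1+a)*a by ring, h]; ring)
    have hb : b ≠ 0 := fun h => hD (by rw [h]; ring)
    have hb' : (1:ℂ) + b ≠ 0 := fun h => hD (by
      have : a * (1 + a) * b * (1 + b) * c = (1+b) * (a*(1+a)*b*c) := by ring
      rw [this, h]; ring)
    have hc : c ≠ 0 := fun h => hD (by rw [h]; ring)
    have e1 := partial1 hD
    have e2 := partial2 hD
    have e3 := partial3 hD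
    rw [hf] at e1 e2 e3
    simp only [ContinuousLinearMap.zero_apply] at e1 e2 e3
    have hd1 : (a*(1+a))^2 * (b*(1+b)) * c ≠ 0 := by
      apply mul_ne_zero (mul_ne_zero (pow_ne_zero _ (mul_ne_zero ha ha')) (mul_ne_zero hb hb')) hc
    have hd2 : (b*(1+b))^2 * (a*(1+a)) * c ≠ 0 := by
      apply mul_ne_zero (mul_ne_zero (pow_ne_zero _ (mul_ne_zero hb hb')) (mul_ne_zero ha ha')) hc
    have h2a : 1 + 2*a = 0 := by
      rcases div_eq_zero_iff.mp (neg_eq_zero.mp e1.symm) with h | h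
      · exact h
      · exact absurd h hd1
    have h2b : 1 + 2*b = 0 := by
      rcases div_eq_zero_iff.mp (neg_eq_zero.mp e2.symm) with h | h
      · exact h
      · exact absurd h hd2
    have haa : a = -1/2 := by linear_combination h2a / 2
    have hbb : b = -1/2 := by linear_combination h2b / 2
    subst haa hbb
    have hc2 : c^2 = 16 := by
      field_simp at e3
      linear_combination -e3
    have : (c - 4) * (c + 4) = 0 := by linear_combination hc2
    rcases mul_eq_zero.mp this with h | h
    · exact Or.inl ⟨rfl, rfl, by linear_combination h⟩
    · exact Or.inr ⟨rfl, rfl, by linear_combination h⟩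
  · rintro (⟨ha, hb, hc⟩ | ⟨ha, hb, hc⟩) <;> subst ha hb hc
    · have hD : (-1/2 : ℂ) * (1 + -1/2) * (-1/2) * (1 + -1/2) * 4 ≠ 0 := by norm_num
      refine ⟨hD, clm_zero_s11 _ ?_ ?_ ?_⟩
      · rw [partial1 hD]; norm_num
      · rw [partial2 hD]; norm_num
      · rw [partial3 hD]; norm_num
    · have hD : (-1/2 : ℂ) * (1 + -1/2) * (-1/2) * (1 + -1/2) * (-4) ≠ 0 := by norm_num
      refine ⟨hD, clm_zero_s11 _ ?_ ?_ ?_⟩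
      · rw [partial1 hD]; norm_num
      · rw [partial2 hD]; norm_num
      · rw [partial3 hD]; norm_num
end

section
/- The set $\mathcal{M}=\{(A,B)\in SU(2)\times SU(2) : ABA^{-1}B^{-1}=-I\}$ is nonempty — it contains the pair $A=\begin{pmatrix} i & 0\\ 0 & -i\end{pmatrix}$, $B=\begin{pmatrix} 0 & 1\\ -1 & 0\end{pmatrix}$ — and $SU(2)$ acts transitively on $\mathcal{M}$ by simultaneous conjugation: for any two pairs $(A,B),(A',B')\in\mathcal{M}$ there exists $g\in SU(2)$ with $gAg^{-1}=A'$ and $gBg^{-1}=B'$. -/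
open Matrix Complex

local notation "σ" x => (starRingEnd ℂ) x

lemma star_fin_two (a b c d : ℂ) :
    star !![a, b; c, d] = !![σ a, σ c; σ b, σ d] := by
  ext i j
  fin_cases i <;> fin_cases j <;> simp [conjTranspose_apply, Complex.star_def]

lemma mem_su2 (a b : ℂ) (h : a * (σ a) + b * (σ b) = 1) :
    !![a, b; -(σ b), σ a] ∈ Matrix.specialUnitaryGroup (Fin 2) ℂ := by
  rw [Matrix.mem_specialUnitaryGroup_iff]
  refine ⟨?_, ?_⟩
  · rw [Matrix.mem_unitaryGroup_iff, star_fin_two]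
    simp only [map_neg, Complex.conj_conj]
    rw [Matrix.mul_fin_two]
    ext i j
    fin_cases i <;> fin_cases j <;> simp [Matrix.one_apply] <;>
      first | ring1 | linear_combination h
  · rw [Matrix.det_fin_two_of]
    linear_combination h

lemma su2_form {M : Matrix (Fin 2) (Fin 2) ℂ} (h : M ∈ Matrix.specialUnitaryGroup (Fin 2) ℂ) :
    ∃ a b : ℂ, M = !![a, b; -(σ b), σ a] ∧ a * (σ a) + b * (σ b) = 1 := by
  rw [Matrix.mem_specialUnitaryGroup_iff, Matrix.mem_unitaryGroup_iff'] at h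
  obtain ⟨hU, hdet⟩ := h
  refine ⟨M 0 0, M 0 1, ?_, ?_⟩
  all_goals {
    have hM := Matrix.eta_fin_two M
    set a := M 0 0; set b := M 0 1; set c := M 1 0; set d := M 1 1
    have hadj : M * !![d, -b; -c, a] = 1 := by
      have := Matrix.mul_adjugate M
      rw [hdet, one_smul] at this
      rw [hM, Matrix.adjugate_fin_two_of] at this
      rw [hM]; convert this using 2
    have hstar : star M = !![d, -b; -c, a] := by
      calc star M = star M * (M * !![d, -b; -c, a]) := by rw [hadj, mul_one]
      _ = (star M * M) * !![d, -b; -c, a] := by rw [mul_assoc]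
      _ = !![d, -b; -c, a] := by rw [hU, one_mul]
    rw [hM, star_fin_two] at hstar
    have h' := Matrix.ext_iff.mpr hstar
    have hc : c = -(σ b) := by
      have := h' 0 1
      simp at this
      rw [← Complex.conj_conj c, this]; simp
    have hd : d = σ a := by
      have := h' 0 0
      simp at this
      rw [← Complex.conj_conj d, ← this]; simp
    first
    | rw [hM, hc, hd]
    | (rw [hM, Matrix.det_fin_two_of, hc, hd] at hdet; linear_combination hdet)
  }

noncomputable section

abbrev SU2 := Matrix.specialUnitaryGroup (Fin 2) ℂ

def Astd : Matrix (Fin 2) (Fin 2) ℂ := !![I, 0; 0, -I]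
def Bstd : Matrix (Fin 2) (Fin 2) ℂ := !![0, 1; -1, 0]

lemma star_mem_su2 {M : Matrix (Fin 2) (Fin 2) ℂ} (h : M ∈ SU2) : star M ∈ SU2 := by
  rw [Matrix.mem_specialUnitaryGroup_iff] at h ⊢
  exact ⟨Unitary.star_mem h.1, by
    rw [show star M = Mᴴ from rfl, Matrix.det_conjTranspose, h.2]; simp⟩

lemma su2_star_mul {M : Matrix (Fin 2) (Fin 2) ℂ} (h : M ∈ SU2) : star M * M = 1 := h.1.1

lemma su2_mul_star {M : Matrix (Fin 2) (Fin 2) ℂ} (h : M ∈ SU2) : M * star M = 1 := h.1.2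

lemma su2_inv {M : Matrix (Fin 2) (Fin 2) ℂ} (h : M ∈ SU2) : M⁻¹ = star M :=
  Matrix.inv_eq_left_inv (su2_star_mul h)

lemma su2_inv_mem {M : Matrix (Fin 2) (Fin 2) ℂ} (h : M ∈ SU2) : M⁻¹ ∈ SU2 := by
  rw [su2_inv h]; exact star_mem_su2 h

lemma conj_eq {g M N : Matrix (Fin 2) (Fin 2) ℂ} (hg : g ∈ SU2) (h : g * M = N * g) :
    g * M * g⁻¹ = N := by
  rw [h, mul_assoc, su2_inv hg, su2_mul_star hg, mul_one]

lemma stage1 {A : Matrix (Fin 2) (Fin 2) ℂ} (hA : A ∈ SU2) (htr : A.trace = 0) :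
    ∃ g ∈ SU2, g * A = Astd * g := by
  obtain ⟨a, b, hform, hnorm⟩ := su2_form hA
  have hre : a.re = 0 := by
    have h1 : a + (σ a) = 0 := by
      have := htr
      rw [hform, Matrix.trace_fin_two] at this
      simpa using this
    have h2 : ((2 * a.re : ℝ) : ℂ) = 0 := by rw [← Complex.add_conj]; exact h1
    have := Complex.ofReal_eq_zero.mp h2
    linarith
  set t : ℝ := a.im with ht
  have ha : a = I * t := by apply Complex.ext <;> simp [hre, ht]
  have hsa : (σ a) = -a := by apply Complex.ext <;> simp [hre]
  have hb : b * (σ b) = 1 - (t : ℂ) ^ 2 := by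
    rw [hsa, ha] at hnorm
    linear_combination hnorm + (t:ℂ)^2 * Complex.I_sq
  have hbn : Complex.normSq b = 1 - t ^ 2 := by
    have : (Complex.normSq b : ℂ) = ((1 - t^2 : ℝ) : ℂ) := by
      rw [← Complex.mul_conj]; push_cast; exact hb
    exact_mod_cast this
  have ht1 : t ≤ 1 := by nlinarith [Complex.normSq_nonneg b]
  by_cases hcase : t = 1
  · have hb0 : b = 0 := by
      have : Complex.normSq b = 0 := by rw [hbn, hcase]; ring
      exact Complex.normSq_eq_zero.mp this
    refine ⟨1, one_mem _, ?_⟩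
    rw [one_mul, mul_one, hform, hb0, hsa, ha, hcase]
    ext i j
    fin_cases i <;> fin_cases j <;> simp [Astd]
  · have htlt : t < 1 := lt_of_le_of_ne ht1 hcase
    set N : ℝ := Real.sqrt (2 * (1 - t)) with hN
    have hNpos : 0 < N := Real.sqrt_pos.mpr (by linarith)
    have hN2 : (N : ℝ) ^ 2 = 2 * (1 - t) := Real.sq_sqrt (by linarith)
    have hNne : (N : ℂ) ≠ 0 := by exact_mod_cast hNpos.ne'
    set p : ℂ := (σ b) / N with hp
    set q : ℂ := -I * (1 - t) / N with hq
    refine ⟨!![p, q; -(σ q), σ p], mem_su2 p q ?_, ?_⟩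
    · rw [hp, hq]
      have e1 : (σ ((σ b) / (N:ℂ))) = b / N := by
        rw [map_div₀]; simp
      have e2 : (σ (-I * (1 - (t:ℂ)) / N)) = I * (1 - t) / N := by
        rw [map_div₀]; push_cast; simp [_root_.map_mul]; try ring
      rw [e1, e2]
      have hNC : (N:ℂ)^2 = 2*(1-(t:ℂ)) := by exact_mod_cast hN2
      field_simp
      linear_combination hb - hNC - (1-(t:ℂ))^2 * Complex.I_sq
    · have e2' : (σ (-I * (1 - (t:ℂ)) / N)) = I * (1 - t) / N := by
        rw [map_div₀]; push_cast; simp [_root_.map_mul]; try ring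
      have hg1 : !![p, q; -(σ q), σ p] =
          !![(σ b)/N, -I*(1-(t:ℂ))/N; -I*(1-(t:ℂ))/N, b/N] := by
        rw [hp, hq]
        ext i j
        fin_cases i <;> fin_cases j <;> simp [e2', map_div₀] <;> ring
      rw [hg1, hform, hsa, ha, Astd, Matrix.mul_fin_two, Matrix.mul_fin_two]
      ext i j
      fin_cases i <;> fin_cases j <;> simp <;> field_simp <;>
        first
          | ring1
          | linear_combination hb + (1-(t:ℂ)^2) * Complex.I_sq
          | linear_combination (-(N:ℂ)^2) * hb + ((N:ℂ)^2*((t:ℂ)^2-1)) * Complex.I_sq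
          | linear_combination -hb - (1-(t:ℂ)^2) * Complex.I_sq
          | linear_combination ((N:ℂ)^2) * hb - ((N:ℂ)^2*((t:ℂ)^2-1)) * Complex.I_sq

lemma stage2 {B : Matrix (Fin 2) (Fin 2) ℂ} (hB : B ∈ SU2)
    (hanti : Astd * B = -(B * Astd)) :
    ∃ h ∈ SU2, h * B = Bstd * h ∧ h * Astd = Astd * h := by
  obtain ⟨x, y, hform, hnorm⟩ := su2_form hB
  have hx : x = 0 := by
    rw [hform, Astd] at hanti
    rw [Matrix.mul_fin_two, Matrix.mul_fin_two] at hanti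
    have h00 := Matrix.ext_iff.mpr hanti 0 0
    simp at h00
    -- h00 : I * x = -(x * I) roughly
    have h2 : ((2:ℂ) * I) * x = 0 := by linear_combination h00
    have hI : ((2:ℂ) * I) ≠ 0 := by
      simp [Complex.I_ne_zero]
    exact (mul_eq_zero.mp h2).resolve_left hI
  rw [hx] at hform hnorm
  simp only [map_zero, mul_zero, zero_mul, zero_add, neg_zero] at hform hnorm
  -- hform : B = !![0, y; -σ y, 0], hnorm : y * σ y = 1
  have hy0 : (σ y) ≠ 0 := by
    intro h0
    rw [h0, mul_zero] at hnorm
    exact zero_ne_one hnorm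
  set w : ℂ := (σ y) ^ ((2:ℂ)⁻¹) with hw
  have hww : w * w = σ y := by
    rw [hw, ← Complex.cpow_add _ _ hy0]
    norm_num
  have hy : y = (σ w) * (σ w) := by
    rw [← _root_.map_mul, hww, Complex.conj_conj]
  have hw1 : w * (σ w) = 1 := by
    have h4 : (w * σ w) * (w * σ w) = 1 := by
      calc (w * σ w) * (w * σ w) = (w * w) * ((σ w) * (σ w)) := by ring
      _ = (σ y) * y := by rw [hww, ← _root_.map_mul, hww, Complex.conj_conj]
      _ = 1 := by rw [mul_comm]; exact hnorm
    have h5 : ((Complex.normSq w : ℝ) : ℂ) = w * σ w := (Complex.mul_conj w).symm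
    have h6 : ((Complex.normSq w ^ 2 : ℝ) : ℂ) = 1 := by push_cast; rw [h5]; linear_combination h4
    have h7 : (Complex.normSq w) ^ 2 = 1 := by exact_mod_cast h6
    have h8 : Complex.normSq w = 1 := by nlinarith [Complex.normSq_nonneg w]
    rw [← h5, h8]; norm_num
  refine ⟨!![w, 0; 0, σ w], ?_, ?_, ?_⟩
  · have : !![w, (0:ℂ); 0, σ w] = !![w, 0; -(σ 0), σ w] := by norm_num
    rw [this]
    exact mem_su2 w 0 (by simpa using hw1)
  · rw [hform, Bstd, Matrix.mul_fin_two, Matrix.mul_fin_two]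
    ext i j
    fin_cases i <;> fin_cases j <;> simp <;>
      first
        | (rw [hy]; linear_combination (σ w) * hw1)
        | (rw [← hww]; linear_combination w * hw1)
  · rw [Astd, Matrix.mul_fin_two, Matrix.mul_fin_two]
    ext i j
    fin_cases i <;> fin_cases j <;> simp <;> ring

lemma conj_mul_conj {g X Y : Matrix (Fin 2) (Fin 2) ℂ} (hg : g ∈ SU2) :
    (g * X * g⁻¹) * (g * Y * g⁻¹) = g * (X * Y) * g⁻¹ := by
  have h1 : g⁻¹ * g = 1 := by rw [su2_inv hg]; exact su2_star_mul hg
  calc (g * X * g⁻¹) * (g * Y * g⁻¹) = g * X * (g⁻¹ * g) * Y * g⁻¹ := by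
        simp only [mul_assoc]
  _ = g * (X * Y) * g⁻¹ := by rw [h1, mul_one]; simp only [mul_assoc]

/-- The set of pairs `(A, B)` of `SU(2)` matrices with `ABA⁻¹B⁻¹ = -I`. -/
def commMinusOne : Set (Matrix (Fin 2) (Fin 2) ℂ × Matrix (Fin 2) (Fin 2) ℂ) :=
  {p | p.1 ∈ Matrix.specialUnitaryGroup (Fin 2) ℂ ∧
       p.2 ∈ Matrix.specialUnitaryGroup (Fin 2) ℂ ∧
       p.1 * p.2 * p.1⁻¹ * p.2⁻¹ = -1}

lemma reduce {pp : Matrix (Fin 2) (Fin 2) ℂ × Matrix (Fin 2) (Fin 2) ℂ}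
    (hpp : pp ∈ commMinusOne) :
    ∃ g ∈ SU2, g * pp.1 = Astd * g ∧ g * pp.2 = Bstd * g := by
  obtain ⟨hA, hB, hc⟩ := hpp
  set A := pp.1 with hA'
  set B := pp.2 with hB'
  have eA : A⁻¹ * A = 1 := by rw [su2_inv hA]; exact su2_star_mul hA
  have eB : B⁻¹ * B = 1 := by rw [su2_inv hB]; exact su2_star_mul hB
  have eB' : B * B⁻¹ = 1 := by rw [su2_inv hB]; exact su2_mul_star hB
  have hAB : A * B = -(B * A) := by
    have h0 := congrArg (fun X => X * B * A) hc
    rw [mul_assoc (A * B * A⁻¹) B⁻¹ B, eB, mul_one, mul_assoc (A * B) A⁻¹ A, eA, mul_one] at h0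
    rw [h0]; simp
  have htr : A.trace = 0 := by
    have h2 : B * A * B⁻¹ = -A := by
      have : B * A = -(A * B) := by rw [hAB, neg_neg]
      rw [this]
      calc -(A * B) * B⁻¹ = -(A * (B * B⁻¹)) := by simp only [mul_assoc, Matrix.neg_mul]
      _ = -A := by rw [eB', mul_one]
    have h3 := congrArg Matrix.trace h2
    rw [Matrix.trace_neg, Matrix.trace_mul_comm (B * A) B⁻¹, ← mul_assoc, eB, one_mul] at h3
    linear_combination (1/2 : ℂ) * h3
  obtain ⟨g1, hg1mem, hg1⟩ := stage1 hA htr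
  set B1 := g1 * B * g1⁻¹ with hB1
  have hB1mem : B1 ∈ SU2 := mul_mem (mul_mem hg1mem hB) (su2_inv_mem hg1mem)
  have hAstd : g1 * A * g1⁻¹ = Astd := conj_eq hg1mem hg1
  have hanti : Astd * B1 = -(B1 * Astd) := by
    rw [← hAstd, hB1, conj_mul_conj hg1mem, conj_mul_conj hg1mem, hAB]
    simp [Matrix.neg_mul, Matrix.mul_neg]
  obtain ⟨h, hhmem, hhB, hhA⟩ := stage2 hB1mem hanti
  refine ⟨h * g1, mul_mem hhmem hg1mem, ?_, ?_⟩
  · calc h * g1 * A = h * (Astd * g1) := by rw [mul_assoc, hg1]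
    _ = (h * Astd) * g1 := by rw [mul_assoc]
    _ = Astd * (h * g1) := by rw [hhA, mul_assoc]
  · have hg1B : g1 * B = B1 * g1 := by
      rw [hB1, mul_assoc, su2_inv hg1mem, su2_star_mul hg1mem, mul_one]
    rw [mul_assoc, hg1B, ← mul_assoc, hhB, mul_assoc]

lemma Astd_mem : Astd ∈ SU2 := by
  have h : Astd = !![I, 0; -(σ (0:ℂ)), σ I] := by
    rw [Astd]; ext i j; fin_cases i <;> fin_cases j <;> simp
  rw [h]
  exact mem_su2 I 0 (by simp)

lemma Bstd_mem : Bstd ∈ SU2 := by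
  have h : Bstd = !![0, 1; -(σ (1:ℂ)), σ (0:ℂ)] := by
    rw [Bstd]; ext i j; fin_cases i <;> fin_cases j <;> simp
  rw [h]
  exact mem_su2 0 1 (by simp)

lemma std_comm : Astd * Bstd * Astd⁻¹ * Bstd⁻¹ = -1 := by
  have hAi : Astd⁻¹ = !![-I, 0; 0, I] := by
    rw [su2_inv Astd_mem, Astd, star_fin_two]
    ext i j; fin_cases i <;> fin_cases j <;> simp
  have hBi : Bstd⁻¹ = !![0, -1; 1, 0] := by
    rw [su2_inv Bstd_mem, Bstd, star_fin_two]
    ext i j; fin_cases i <;> fin_cases j <;> simp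
  rw [hAi, hBi, Astd, Bstd, Matrix.mul_fin_two, Matrix.mul_fin_two, Matrix.mul_fin_two]
  ext i j
  fin_cases i <;> fin_cases j <;>
    simp [Matrix.one_apply, Complex.I_mul_I] <;> ring_nf <;> simp [Complex.I_sq]

lemma transfer {gp gq M N C : Matrix (Fin 2) (Fin 2) ℂ} (hgp : gp ∈ SU2) (hgq : gq ∈ SU2)
    (h1 : gp * M = C * gp) (h2 : gq * N = C * gq) :
    (gq⁻¹ * gp) * M * (gq⁻¹ * gp)⁻¹ = N := by
  apply conj_eq (mul_mem (su2_inv_mem hgq) hgp)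
  have egq : gq⁻¹ * gq = 1 := by rw [su2_inv hgq]; exact su2_star_mul hgq
  have egq' : gq * gq⁻¹ = 1 := by rw [su2_inv hgq]; exact su2_mul_star hgq
  have hN : N = gq⁻¹ * (C * gq) := by
    rw [← h2, ← mul_assoc, egq, one_mul]
  rw [hN]
  calc gq⁻¹ * gp * M = gq⁻¹ * (C * gp) := by rw [mul_assoc, h1]
  _ = gq⁻¹ * (C * (gq * (gq⁻¹ * gp))) := by
      rw [← mul_assoc gq gq⁻¹ gp, egq', one_mul]
  _ = gq⁻¹ * (C * gq) * (gq⁻¹ * gp) := by simp only [mul_assoc]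

theorem stmt13 :
    (!![I, 0; 0, -I], !![0, 1; -1, 0]) ∈ commMinusOne ∧
    ∀ p ∈ commMinusOne, ∀ q ∈ commMinusOne,
      ∃ g ∈ Matrix.specialUnitaryGroup (Fin 2) ℂ,
        g * p.1 * g⁻¹ = q.1 ∧ g * p.2 * g⁻¹ = q.2 := by
  constructor
  · exact ⟨Astd_mem, Bstd_mem, std_comm⟩
  · intro p hp q hq
    obtain ⟨gp, hgp, hgpA, hgpB⟩ := reduce hp
    obtain ⟨gq, hgq, hgqA, hgqB⟩ := reduce hq
    refine ⟨gq⁻¹ * gp, mul_mem (su2_inv_mem hgq) hgp, ?_, ?_⟩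
    · exact transfer hgp hgq hgpA hgqA
    · exact transfer (M := p.2) (N := q.2) hgp hgq hgpB hgqB
end
end
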